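/- For any α ∈ R, the open subset of the Klein bottle K_1 (with a = b = 2π) where sin(x−α)·sin(y) ≠ 0 has exactly two connected components. -/

import Mathlib

open Real

/-- The identification relation on `ℝ²` defining the flat Klein bottle `K_1`
(`a = b = 2π`): the group generated by `τ₁(x,y) = (x, y+2π)` and
`τ(x,y) = (x+π, 2π−y)` consists of the maps
`(x,y) ↦ (x + kπ, (−1)^k y + 2πl)`, `k, l ∈ ℤ`. -/
def kleinRel (p q : ℝ × ℝ) : Prop :=
  ∃ k l : ℤ, q.1 = p.1 + k * π ∧ q.2 = (-1 : ℝ) ^ k * p.2 + 2 * π * l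

/-- The flat Klein bottle `K_1` as a quotient topological space. -/
def KleinBottle : Type := Quot kleinRel

instance : TopologicalSpace KleinBottle := (instTopologicalSpaceQuot : TopologicalSpace (Quot kleinRel))

/-- The function `u(x,y) = sin(x−α) sin y` is invariant under the identification. -/
lemma klein_sin_invariance (α : ℝ) {p q : ℝ × ℝ} (h : kleinRel p q) :
    Real.sin (q.1 - α) * Real.sin q.2 = Real.sin (p.1 - α) * Real.sin p.2 := by
  obtain ⟨k, l, h1, h2⟩ := h
  have hs1 : Real.sin (q.1 - α) = (-1 : ℝ) ^ k * Real.sin (p.1 - α) := by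
    rw [h1, show p.1 + k * π - α = (p.1 - α) + k * π by ring, Real.sin_add_int_mul_pi]
  have hs2 : Real.sin q.2 = (-1 : ℝ) ^ k * Real.sin p.2 := by
    rw [h2, show (-1 : ℝ) ^ k * p.2 + 2 * π * l = (-1 : ℝ) ^ k * p.2 + l * (2 * π) by ring,
      Real.sin_add_int_mul_two_pi]
    rcases Int.even_or_odd k with he | ho
    · rw [he.neg_one_zpow, one_mul, one_mul]
    · rw [ho.neg_one_zpow, neg_one_mul, neg_one_mul, Real.sin_neg]
  have hk : ((-1 : ℝ) ^ k) * ((-1 : ℝ) ^ k) = 1 := by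
    rw [← zpow_add₀ (by norm_num : (-1 : ℝ) ≠ 0)]
    exact (Even.neg_one_zpow ⟨k, rfl⟩)
  rw [hs1, hs2]
  calc (-1:ℝ) ^ k * Real.sin (p.1 - α) * ((-1:ℝ) ^ k * Real.sin p.2)
      = ((-1:ℝ) ^ k * (-1:ℝ) ^ k) * (Real.sin (p.1 - α) * Real.sin p.2) := by ring
    _ = Real.sin (p.1 - α) * Real.sin p.2 := by rw [hk, one_mul]

/-- Every point where `u ≠ 0` has a representative in the fundamental rectangle
`(α, α+π) × ((0, 2π) \ {π})`. -/
lemma exists_good_rep (α : ℝ) (p : ℝ × ℝ) (hp : Real.sin (p.1 - α) * Real.sin p.2 ≠ 0) :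
    ∃ q : ℝ × ℝ, kleinRel p q ∧ q.1 ∈ Set.Ioo α (α + π) ∧
      q.2 ∈ Set.Ioo 0 (2 * π) ∧ q.2 ≠ π := by
  have hπ : (0 : ℝ) < π := Real.pi_pos
  set t : ℝ := (p.1 - α) / π with ht
  set k : ℤ := -⌊t⌋ with hk
  set s : ℝ := ((-1 : ℝ) ^ k * p.2) / (2 * π) with hs
  set l : ℤ := -⌊s⌋ with hl
  set q : ℝ × ℝ := (p.1 + k * π, (-1 : ℝ) ^ k * p.2 + 2 * π * l) with hq
  have hrel : kleinRel p q := ⟨k, l, rfl, rfl⟩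
  have hinv := klein_sin_invariance α hrel
  have hq1 : q.1 - α = π * Int.fract t := by
    rw [hq]
    simp only [Int.fract]
    push_cast [hk]
    field_simp [ht]
    have h' : π * t = p.1 - α := by rw [ht]; field_simp
    linarith
  have hfr1 : Int.fract t ≠ 0 := by
    intro h0
    have : p.1 - α = (⌊t⌋ : ℝ) * π := by
      have := Int.fract_add_floor t
      rw [h0, zero_add] at this
      have h2 : π * t = p.1 - α := by rw [ht]; field_simp
      rw [this]; linarith [h2]
    apply hp
    rw [this, Real.sin_int_mul_pi, zero_mul]
  have hq1mem : q.1 ∈ Set.Ioo α (α + π) := by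
    constructor
    · have : 0 < Int.fract t := lt_of_le_of_ne (Int.fract_nonneg t) (Ne.symm hfr1)
      nlinarith [hq1]
    · have : Int.fract t < 1 := Int.fract_lt_one t
      nlinarith [hq1]
  have hq2 : q.2 = 2 * π * Int.fract s := by
    rw [hq]
    simp only [Int.fract]
    push_cast [hl]
    field_simp [hs]
    have h' : 2 * π * s = (-1 : ℝ) ^ k * p.2 := by rw [hs]; field_simp
    linarith
  have hsinq2 : Real.sin q.2 ≠ 0 := by
    intro h0
    rw [h0, mul_zero] at hinv
    exact hp hinv.symm
  have hfr2 : Int.fract s ≠ 0 := by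
    intro h0; apply hsinq2; rw [hq2, h0, mul_zero, Real.sin_zero]
  have hq2mem : q.2 ∈ Set.Ioo 0 (2 * π) := by
    constructor
    · have : 0 < Int.fract s := lt_of_le_of_ne (Int.fract_nonneg s) (Ne.symm hfr2)
      nlinarith [hq2]
    · have : Int.fract s < 1 := Int.fract_lt_one s
      nlinarith [hq2]
  refine ⟨q, hrel, hq1mem, hq2mem, ?_⟩
  intro h0; apply hsinq2; rw [h0, Real.sin_pi]

/-- The function `u` descends to the Klein bottle. -/
noncomputable def kleinU (α : ℝ) : Quot kleinRel → ℝ :=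
  Quot.lift (fun p : ℝ × ℝ => Real.sin (p.1 - α) * Real.sin p.2)
    (fun _ _ h => (klein_sin_invariance α h).symm)

lemma kleinU_continuous (α : ℝ) : Continuous (kleinU α) :=
  continuous_quot_lift _
    ((Real.continuous_sin.comp (continuous_fst.sub continuous_const)).mul
      (Real.continuous_sin.comp continuous_snd))

lemma sin_neg_of_pi_lt (y : ℝ) (h1 : π < y) (h2 : y < 2 * π) : Real.sin y < 0 := by
  have hpos : 0 < Real.sin (y - π) :=
    Real.sin_pos_of_pos_of_lt_pi (by linarith) (by linarith)
  have := Real.sin_sub_pi y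
  linarith

/-- for any `α ∈ ℝ`, the open subset of `K_1` where
`sin(x−α)·sin(y) ≠ 0` has exactly two connected components. -/
theorem two_nodal_domains_lambda3 (α : ℝ) :
    Nat.card (ConnectedComponents
      ↥(Quot.mk kleinRel '' {p : ℝ × ℝ | Real.sin (p.1 - α) * Real.sin p.2 ≠ 0})) = 2 := by
  have hπ : (0 : ℝ) < π := Real.pi_pos
  set U : Set (ℝ × ℝ) := {p : ℝ × ℝ | Real.sin (p.1 - α) * Real.sin p.2 ≠ 0} with hU
  set S : Set (Quot kleinRel) := Quot.mk kleinRel '' U with hS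
  set g : ↥S → ℝ := fun z => kleinU α z.val with hg
  have hgcont : Continuous g := (kleinU_continuous α).comp continuous_subtype_val
  have hgne : ∀ z : ↥S, g z ≠ 0 := by
    rintro ⟨z, p, hp, rfl⟩
    exact hp
  set Cpos : Set ↥S := {z | 0 < g z} with hCpos
  set Cneg : Set ↥S := {z | g z < 0} with hCneg
  have hCpos_open : IsOpen Cpos := isOpen_Ioi.preimage hgcont
  have hCpos_compl : Cposᶜ = Cneg := by
    ext z
    simp only [hCpos, hCneg, Set.mem_compl_iff, Set.mem_setOf_eq, not_lt]
    exact ⟨fun h => lt_of_le_of_ne h (hgne z), le_of_lt⟩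
  have hCpos_clopen : IsClopen Cpos := by
    refine ⟨?_, hCpos_open⟩
    rw [← isOpen_compl_iff, hCpos_compl]
    exact isOpen_Iio.preimage hgcont
  -- preconnectedness of images of rectangles
  have rect_pre : ∀ a b : ℝ,
      IsPreconnected (Quot.mk kleinRel '' (Set.Ioo α (α + π) ×ˢ Set.Ioo a b)) := fun a b =>
    ((convex_Ioo α (α + π)).prod (convex_Ioo a b)).isPreconnected.image _
      continuous_quot_mk.continuousOn
  -- the positive part is the image of the lower rectangle
  have key_pos : Subtype.val '' Cpos
      = Quot.mk kleinRel '' (Set.Ioo α (α + π) ×ˢ Set.Ioo 0 π) := by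
    apply Set.Subset.antisymm
    · rintro _ ⟨⟨z, hzS⟩, hzpos, rfl⟩
      obtain ⟨p, hp, rfl⟩ := hzS
      have hppos : 0 < Real.sin (p.1 - α) * Real.sin p.2 := hzpos
      obtain ⟨q, hrel, hq1, hq2, hq2ne⟩ := exists_good_rep α p hp
      have heq : Quot.mk kleinRel p = Quot.mk kleinRel q := Quot.sound hrel
      have hqpos : 0 < Real.sin (q.1 - α) * Real.sin q.2 := by
        rw [klein_sin_invariance α hrel]; exact hppos
      have hsin1 : 0 < Real.sin (q.1 - α) :=
        Real.sin_pos_of_pos_of_lt_pi (by linarith [hq1.1]) (by linarith [hq1.2])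
      have hsin2 : 0 < Real.sin q.2 := by
        rcases mul_pos_iff.mp hqpos with ⟨_, h⟩ | ⟨h, _⟩
        · exact h
        · linarith
      have hq2lt : q.2 < π := by
        by_contra hge
        push_neg at hge
        have hgt : π < q.2 := lt_of_le_of_ne hge (Ne.symm hq2ne)
        have := sin_neg_of_pi_lt q.2 hgt hq2.2
        linarith
      exact ⟨q, ⟨hq1, ⟨hq2.1, hq2lt⟩⟩, heq.symm⟩
    · rintro _ ⟨q, ⟨hq1, hq2⟩, rfl⟩
      have hsin1 : 0 < Real.sin (q.1 - α) :=
        Real.sin_pos_of_pos_of_lt_pi (by linarith [hq1.1]) (by linarith [hq1.2])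
      have hsin2 : 0 < Real.sin q.2 := Real.sin_pos_of_pos_of_lt_pi hq2.1 hq2.2
      have hqpos : 0 < Real.sin (q.1 - α) * Real.sin q.2 := mul_pos hsin1 hsin2
      exact ⟨⟨Quot.mk kleinRel q, ⟨q, ne_of_gt hqpos, rfl⟩⟩, hqpos, rfl⟩
  -- the negative part is the image of the upper rectangle
  have key_neg : Subtype.val '' Cneg
      = Quot.mk kleinRel '' (Set.Ioo α (α + π) ×ˢ Set.Ioo π (2 * π)) := by
    apply Set.Subset.antisymm
    · rintro _ ⟨⟨z, hzS⟩, hzneg, rfl⟩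
      obtain ⟨p, hp, rfl⟩ := hzS
      have hpneg : Real.sin (p.1 - α) * Real.sin p.2 < 0 := hzneg
      obtain ⟨q, hrel, hq1, hq2, hq2ne⟩ := exists_good_rep α p hp
      have heq : Quot.mk kleinRel p = Quot.mk kleinRel q := Quot.sound hrel
      have hqneg : Real.sin (q.1 - α) * Real.sin q.2 < 0 := by
        rw [klein_sin_invariance α hrel]; exact hpneg
      have hsin1 : 0 < Real.sin (q.1 - α) :=
        Real.sin_pos_of_pos_of_lt_pi (by linarith [hq1.1]) (by linarith [hq1.2])
      have hsin2 : Real.sin q.2 < 0 := by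
        rcases mul_neg_iff.mp hqneg with ⟨_, h⟩ | ⟨h, _⟩
        · exact h
        · linarith
      have hq2gt : π < q.2 := by
        by_contra hle
        push_neg at hle
        have hlt : q.2 < π := lt_of_le_of_ne hle hq2ne
        have := Real.sin_pos_of_pos_of_lt_pi hq2.1 hlt
        linarith
      exact ⟨q, ⟨hq1, ⟨hq2gt, hq2.2⟩⟩, heq.symm⟩
    · rintro _ ⟨q, ⟨hq1, hq2⟩, rfl⟩
      have hsin1 : 0 < Real.sin (q.1 - α) :=
        Real.sin_pos_of_pos_of_lt_pi (by linarith [hq1.1]) (by linarith [hq1.2])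
      have hsin2 : Real.sin q.2 < 0 := sin_neg_of_pi_lt q.2 hq2.1 hq2.2
      have hqneg : Real.sin (q.1 - α) * Real.sin q.2 < 0 := mul_neg_of_pos_of_neg hsin1 hsin2
      exact ⟨⟨Quot.mk kleinRel q, ⟨q, ne_of_lt hqneg, rfl⟩⟩, hqneg, rfl⟩
  have hCpos_pre : IsPreconnected Cpos := by
    rw [← Topology.IsInducing.subtypeVal.isPreconnected_image (s := Cpos)]
    rw [key_pos]; exact rect_pre 0 π
  have hCneg_pre : IsPreconnected Cneg := by
    rw [← Topology.IsInducing.subtypeVal.isPreconnected_image (s := Cneg)]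
    rw [key_neg]; exact rect_pre π (2 * π)
  -- witnesses
  have hup : Real.sin ((α + π / 2, π / 2).1 - α) * Real.sin (α + π / 2, π / 2).2 = 1 := by
    have h1 : (α + π / 2, π / 2).1 - α = π / 2 := by ring
    rw [h1]
    norm_num [Real.sin_pi_div_two]
  have hun : Real.sin ((α + π / 2, 3 * π / 2).1 - α) * Real.sin (α + π / 2, 3 * π / 2).2
      = -1 := by
    have h1 : (α + π / 2, 3 * π / 2).1 - α = π / 2 := by ring
    have h2 : (α + π / 2, 3 * π / 2).2 = π / 2 + π := by
      show (3 : ℝ) * π / 2 = π / 2 + π; ring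
    rw [h1, h2, Real.sin_add_pi]
    norm_num [Real.sin_pi_div_two]
  have hmemP : Quot.mk kleinRel (α + π / 2, π / 2) ∈ S :=
    ⟨(α + π / 2, π / 2), by rw [hU, Set.mem_setOf_eq, hup]; norm_num, rfl⟩
  have hmemN : Quot.mk kleinRel (α + π / 2, 3 * π / 2) ∈ S :=
    ⟨(α + π / 2, 3 * π / 2), by rw [hU, Set.mem_setOf_eq, hun]; norm_num, rfl⟩
  set zp : ↥S := ⟨_, hmemP⟩ with hzp
  set zn : ↥S := ⟨_, hmemN⟩ with hzn
  have hzppos : zp ∈ Cpos := by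
    show (0 : ℝ) < g zp
    show (0 : ℝ) < Real.sin ((α + π / 2, π / 2).1 - α) * Real.sin (α + π / 2, π / 2).2
    rw [hup]; norm_num
  have hznneg : zn ∈ Cneg := by
    show g zn < 0
    show Real.sin ((α + π / 2, 3 * π / 2).1 - α) * Real.sin (α + π / 2, 3 * π / 2).2 < 0
    rw [hun]; norm_num
  have hznnotpos : zn ∉ Cpos := by
    rw [← hCpos_compl] at hznneg
    exact hznneg
  -- count components via the Boolean indicator of Cpos
  have hhcont : Continuous Cpos.boolIndicator :=
    (continuous_boolIndicator_iff_isClopen Cpos).mpr hCpos_clopen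
  have hsame : ∀ (C : Set ↥S), IsPreconnected C → ∀ z₁ z₂ : ↥S, z₁ ∈ C → z₂ ∈ C →
      (z₁ : ConnectedComponents ↥S) = z₂ := by
    intro C hC z₁ z₂ h1 h2
    exact ConnectedComponents.coe_eq_coe'.mpr (hC.subset_connectedComponent h2 h1)
  have hbij : Function.Bijective hhcont.connectedComponentsLift := by
    constructor
    · intro a b hab
      obtain ⟨z₁, rfl⟩ := ConnectedComponents.surjective_coe a
      obtain ⟨z₂, rfl⟩ := ConnectedComponents.surjective_coe b
      rw [hhcont.connectedComponentsLift_apply_coe,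
        hhcont.connectedComponentsLift_apply_coe] at hab
      by_cases h1 : z₁ ∈ Cpos
      · have h2 : z₂ ∈ Cpos := by
          rw [Set.mem_iff_boolIndicator] at h1 ⊢
          rw [← hab]; exact h1
        exact hsame Cpos hCpos_pre z₁ z₂ h1 h2
      · have h2 : z₂ ∉ Cpos := by
          rw [Set.notMem_iff_boolIndicator] at h1 ⊢
          rw [← hab]; exact h1
        rw [← hCpos_compl] at hCneg_pre
        exact hsame Cposᶜ hCneg_pre z₁ z₂ h1 h2
    · intro b
      cases b
      · refine ⟨(zn : ConnectedComponents ↥S), ?_⟩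
        rw [hhcont.connectedComponentsLift_apply_coe]
        exact (Set.notMem_iff_boolIndicator _ _).mp hznnotpos
      · refine ⟨(zp : ConnectedComponents ↥S), ?_⟩
        rw [hhcont.connectedComponentsLift_apply_coe]
        exact (Set.mem_iff_boolIndicator _ _).mp hzppos
  have hcard := Nat.card_eq_of_bijective _ hbij
  rw [hcard]
  simp [Nat.card_eq_fintype_card]
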